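/- arXiv:2112.08187 — 3 statements merged into one kernel-verified Lean document; each statement's English description precedes it below -/
import Mathlib

section
/- Let Z be a nonempty finite set, let π̃ : Z → (0,∞), let w : Z × Z → [0,∞), and let T assign to each z ∈ Z a finite subset T(z) ⊆ Z such that (i) z ∈ T(z) for every z, (ii) whenever z' ∈ T(z) one has T(z') = T(z), and (iii) W(z) := Σ_{u ∈ T(z)} w(z,u) > 0 for every z. Define the transition probability, for z' ∈ T(z), by P(z,z') := (1/W(z)) · min( w(z,z'), π̃(z') · w(z',z) · W(z) / (π̃(z) · W(z')) ), and P(z,z') := 0 for z' ∉ T(z). Then P satisfies detailed balance with respect to π̃: for all z, z' ∈ Z, π̃(z) · P(z,z') = π̃(z') · P(z',z). -/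
/-- Detailed balance for the AAPS proposal/accept-reject kernel on a finite state space. -/
theorem aaps_detailed_balance {Z : Type*} [Fintype Z] [Nonempty Z] [DecidableEq Z]
    (pit : Z → ℝ) (hpit : ∀ z, 0 < pit z)
    (w : Z → Z → ℝ) (hw : ∀ z z', 0 ≤ w z z')
    (T : Z → Finset Z)
    (hmem : ∀ z, z ∈ T z)
    (hinv : ∀ z z', z' ∈ T z → T z' = T z)
    (W : Z → ℝ) (hW : ∀ z, W z = ∑ u ∈ T z, w z u)
    (hWpos : ∀ z, 0 < W z)
    (P : Z → Z → ℝ)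
    (hP : ∀ z z', P z z' =
      if z' ∈ T z then
        (1 / W z) * min (w z z') (pit z' * w z' z * W z / (pit z * W z'))
      else 0) :
    ∀ z z', pit z * P z z' = pit z' * P z' z := by
  intro z z'
  by_cases h : z' ∈ T z
  · have h' : z ∈ T z' := by rw [hinv z z' h]; exact hmem z
    rw [hP, hP, if_pos h, if_pos h']
    have h1 : 0 ≤ pit z * (1 / W z) :=
      (mul_pos (hpit z) (one_div_pos.mpr (hWpos z))).le
    have h2 : 0 ≤ pit z' * (1 / W z') :=
      (mul_pos (hpit z') (one_div_pos.mpr (hWpos z'))).le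
    rw [← mul_assoc, mul_min_of_nonneg _ _ h1, ← mul_assoc, mul_min_of_nonneg _ _ h2,
      min_comm]
    have hz := (hpit z).ne'
    have hz' := (hpit z').ne'
    have hWz := (hWpos z).ne'
    have hWz' := (hWpos z').ne'
    congr 1
    · field_simp
    · field_simp
  · have h' : z ∉ T z' := fun hc => h (by rw [hinv z' z hc]; exact hmem z')
    rw [hP, hP, if_neg h, if_neg h']
    ring
end

section
/- Let K ≥ 1 be an integer and let s : ℝ → ℝ be differentiable with s(0) = 0 and s'(0) = 0, and convex on the interval [0, K]. For j ∈ {1,…,K} set r_j := (K+1−j) s(j) and assume Σ_{j=1}^{K} r_j > 0. Let J be the random variable on {1,…,K} with P(J=j) ∝ r_j, set J_K := E[s(J)] = Σ_{j=1}^{K} r_j s(j) / Σ_{j=1}^{K} r_j and Eff_K := J_K/(K+1). Then (a) Eff_K ≥ Eff^{lb}_K := s((K+1)/2)/(K+1); and (b) the lower bound is nondecreasing: for every integer j with 1 ≤ j ≤ K, Eff^{lb}_j ≥ Eff^{lb}_{j-1}, i.e., s((j+1)/2)/(j+1) ≥ s(j/2)/j. -/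
/-- Lower bound on the efficiency of the AAPS tuning diagnostic: with
`r_j = (K+1-j) s(j)` and `J_K = Σ r_j s(j) / Σ r_j`, the efficiency
`Eff_K = J_K/(K+1)` is at least `s((K+1)/2)/(K+1)`, and this lower bound is
nondecreasing in `K`. -/
theorem aaps_efficiency_lower_bound (K : ℕ) (hK : 1 ≤ K)
    (s : ℝ → ℝ) (hdiff : Differentiable ℝ s)
    (hs0 : s 0 = 0) (hs'0 : deriv s 0 = 0)
    (hconv : ConvexOn ℝ (Set.Icc (0 : ℝ) (K : ℝ)) s)
    (hpos : 0 < ∑ j ∈ Finset.Icc 1 K, ((K : ℝ) + 1 - (j : ℝ)) * s (j : ℝ)) :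
    (∑ j ∈ Finset.Icc 1 K, ((K : ℝ) + 1 - (j : ℝ)) * s (j : ℝ) * s (j : ℝ))
        / (∑ j ∈ Finset.Icc 1 K, ((K : ℝ) + 1 - (j : ℝ)) * s (j : ℝ))
        / ((K : ℝ) + 1)
      ≥ s (((K : ℝ) + 1) / 2) / ((K : ℝ) + 1) ∧
    ∀ j : ℕ, 1 ≤ j → j ≤ K →
      s (((j : ℝ) + 1) / 2) / ((j : ℝ) + 1) ≥ s ((j : ℝ) / 2) / (j : ℝ) := by
  have hK1 : (1 : ℝ) ≤ (K : ℝ) := by exact_mod_cast hK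
  have h0K : (0 : ℝ) ∈ Set.Icc (0 : ℝ) (K : ℝ) := ⟨le_refl _, by linarith⟩
  -- tangent line inequality
  have tangent : ∀ x ∈ Set.Icc (0 : ℝ) (K : ℝ), ∀ y ∈ Set.Icc (0 : ℝ) (K : ℝ),
      s x + deriv s x * (y - x) ≤ s y := by
    intro x hx y hy
    rcases lt_trichotomy x y with h | h | h
    · have := hconv.deriv_le_slope hx hy h (hdiff x)
      rw [slope_def_field, le_div_iff₀ (by linarith)] at this
      nlinarith
    · simp [h]
    · have := hconv.slope_le_deriv hy hx h (hdiff x)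
      rw [slope_def_field, div_le_iff₀ (by linarith)] at this
      nlinarith
  -- nonnegativity
  have snn : ∀ x ∈ Set.Icc (0 : ℝ) (K : ℝ), 0 ≤ s x := by
    intro x hx
    have := tangent 0 h0K x hx
    rw [hs0, hs'0] at this
    linarith
  -- scaling: b * s a ≤ a * s b  for 0 ≤ a ≤ b ≤ K, 0 < b
  have hBB : ∀ a b : ℝ, 0 ≤ a → a ≤ b → b ≤ (K : ℝ) → 0 < b → b * s a ≤ a * s b := by
    intro a b ha hab hbK hb
    have hbS : b ∈ Set.Icc (0 : ℝ) (K : ℝ) := ⟨by linarith, hbK⟩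
    have h1 : (0 : ℝ) ≤ 1 - a / b := by
      rw [sub_nonneg, div_le_one hb]; exact hab
    have h2 : (0 : ℝ) ≤ a / b := div_nonneg ha hb.le
    have h3 : (1 - a / b) + a / b = 1 := by ring
    have := hconv.2 h0K hbS h1 h2 h3
    have hc : (1 - a / b) • (0 : ℝ) + (a / b) • b = a := by
      simp only [smul_eq_mul, mul_zero, zero_add]
      field_simp
    rw [hc, hs0] at this
    simp only [smul_eq_mul, mul_zero, zero_add] at this
    calc b * s a ≤ b * (a / b * s b) := by
          apply mul_le_mul_of_nonneg_left this hb.le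
      _ = a * s b := by field_simp
  refine ⟨?_, ?_⟩
  · -- part (a)
    set m : ℝ := ((K : ℝ) + 1) / 2 with hm
    have hm1 : 1 ≤ m := by rw [hm]; linarith
    have hmK : m ≤ (K : ℝ) := by rw [hm]; linarith
    have hmS : m ∈ Set.Icc (0 : ℝ) (K : ℝ) := ⟨by linarith, hmK⟩
    set c : ℝ := deriv s m with hc
    have hc0 : 0 ≤ c := by
      have h1 := hconv.deriv_le_slope h0K hmS (by linarith) (hdiff 0)
      have h2 := hconv.slope_le_deriv h0K hmS (by linarith) (hdiff m)
      rw [hs'0] at h1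
      linarith
    -- membership facts
    have hmem : ∀ j ∈ Finset.Icc 1 K, (1 : ℝ) ≤ (j : ℝ) ∧ (j : ℝ) ≤ (K : ℝ) := by
      intro j hj
      rw [Finset.mem_Icc] at hj
      exact ⟨by exact_mod_cast hj.1, by exact_mod_cast hj.2⟩
    have hrnn : ∀ j ∈ Finset.Icc 1 K, 0 ≤ ((K : ℝ) + 1 - (j : ℝ)) * s (j : ℝ) := by
      intro j hj
      obtain ⟨h1, h2⟩ := hmem j hj
      exact mul_nonneg (by linarith) (snn _ ⟨by linarith, h2⟩)
    -- pairing sum nonneg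
    have pairing : 0 ≤ ∑ j ∈ Finset.Icc 1 K,
        ((j : ℝ) - m) * (((K : ℝ) + 1 - (j : ℝ)) * s (j : ℝ)) := by
      set g : ℕ → ℝ := fun j => ((j : ℝ) - m) * (((K : ℝ) + 1 - (j : ℝ)) * s (j : ℝ)) with hg
      have hrefl : ∑ j ∈ Finset.Icc 1 K, g j = ∑ j ∈ Finset.Icc 1 K, g (K + 1 - j) := by
        apply Finset.sum_nbij' (fun j => K + 1 - j) (fun j => K + 1 - j)
        · intro a ha; rw [Finset.mem_Icc] at ha ⊢; omega
        · intro a ha; rw [Finset.mem_Icc] at ha ⊢; omega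
        · intro a ha; rw [Finset.mem_Icc] at ha; omega
        · intro a ha; rw [Finset.mem_Icc] at ha; omega
        · intro a ha
          have he : K + 1 - (K + 1 - a) = a := by
            rw [Finset.mem_Icc] at ha; omega
          rw [he]
      have h2sum : 0 ≤ ∑ j ∈ Finset.Icc 1 K, (g j + g (K + 1 - j)) := by
        apply Finset.sum_nonneg
        intro j hj
        rw [Finset.mem_Icc] at hj
        have hj1 : (1 : ℝ) ≤ (j : ℝ) := by exact_mod_cast hj.1
        have hjK : (j : ℝ) ≤ (K : ℝ) := by exact_mod_cast hj.2
        have hacast : ((K + 1 - j : ℕ) : ℝ) = (K : ℝ) + 1 - (j : ℝ) := by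
          have : j ≤ K + 1 := by omega
          push_cast [Nat.cast_sub this]; ring
        rw [hg]
        simp only [hacast]
        set a : ℝ := (K : ℝ) + 1 - (j : ℝ) with ha
        have ha1 : 1 ≤ a := by rw [ha]; linarith
        have haK : a ≤ (K : ℝ) := by rw [ha]; linarith
        have key : (((j : ℝ) - m) * (a * s (j : ℝ)) + (a - m) * (((K : ℝ) + 1 - a) * s a))
            = ((j : ℝ) - m) * (a * s (j : ℝ) - (j : ℝ) * s a) := by
          rw [ha, hm]; ring
        rw [key]
        rcases le_total m (j : ℝ) with hcase | hcase
        · have haj : a ≤ (j : ℝ) := by rw [ha] at *; rw [hm] at hcase; linarith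
          have := hBB a (j : ℝ) (by linarith) haj hjK (by linarith)
          have h1 : 0 ≤ a * s (j : ℝ) - (j : ℝ) * s a := by linarith
          exact mul_nonneg (by linarith) h1
        · have haj : (j : ℝ) ≤ a := by rw [ha]; rw [hm] at hcase; linarith
          have := hBB (j : ℝ) a (by linarith) haj haK (by linarith)
          have h1 : a * s (j : ℝ) - (j : ℝ) * s a ≤ 0 := by linarith
          nlinarith
      have : ∑ j ∈ Finset.Icc 1 K, (g j + g (K + 1 - j))
          = 2 * ∑ j ∈ Finset.Icc 1 K, g j := by
        rw [Finset.sum_add_distrib, ← hrefl]; ring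
      rw [this] at h2sum
      linarith
    -- termwise tangent bound and summation
    set S : ℝ := ∑ j ∈ Finset.Icc 1 K, ((K : ℝ) + 1 - (j : ℝ)) * s (j : ℝ) with hS
    have hmain : s m * S ≤ ∑ j ∈ Finset.Icc 1 K,
        ((K : ℝ) + 1 - (j : ℝ)) * s (j : ℝ) * s (j : ℝ) := by
      have hterm : ∀ j ∈ Finset.Icc 1 K,
          s m * (((K : ℝ) + 1 - (j : ℝ)) * s (j : ℝ))
            + c * (((j : ℝ) - m) * (((K : ℝ) + 1 - (j : ℝ)) * s (j : ℝ)))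
          ≤ ((K : ℝ) + 1 - (j : ℝ)) * s (j : ℝ) * s (j : ℝ) := by
        intro j hj
        obtain ⟨h1, h2⟩ := hmem j hj
        have htan := tangent m hmS (j : ℝ) ⟨by linarith, h2⟩
        have hr := hrnn j hj
        nlinarith [mul_le_mul_of_nonneg_left htan hr]
      have hsum := Finset.sum_le_sum hterm
      rw [Finset.sum_add_distrib, ← Finset.mul_sum, ← Finset.mul_sum] at hsum
      nlinarith [mul_nonneg hc0 pairing]
    have hfrac : s m ≤ (∑ j ∈ Finset.Icc 1 K,
        ((K : ℝ) + 1 - (j : ℝ)) * s (j : ℝ) * s (j : ℝ)) / S := by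
      rw [le_div_iff₀ hpos]
      linarith
    rw [ge_iff_le, div_le_div_iff₀ (by linarith) (by linarith)]
    have hK10 : (0:ℝ) < (K:ℝ) + 1 := by linarith
    nlinarith
  · -- part (b)
    intro j hj1 hjK
    have hj1' : (1 : ℝ) ≤ (j : ℝ) := by exact_mod_cast hj1
    have hjK' : (j : ℝ) ≤ (K : ℝ) := by exact_mod_cast hjK
    have hb : ((j : ℝ) + 1) / 2 ≤ (K : ℝ) := by linarith
    have := hBB ((j : ℝ) / 2) (((j : ℝ) + 1) / 2) (by linarith) (by linarith) hb (by linarith)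
    rw [ge_iff_le, div_le_div_iff₀ (by linarith) (by linarith)]
    nlinarith
end

section
/- Let K ≥ 1 be an integer and let s : ℝ → ℝ be convex on [0, K] with s(0) = 0 and s nonnegative on [0, K], and suppose Σ_{j=1}^{K} (K+1−j) s(j) > 0. Let J be the random variable on {1,…,K} with P(J = j) proportional to r_j := (K+1−j) s(j). Then r_{K+1−j} ≥ r_j for every integer j with 1 ≤ j ≤ (K+1)/2, and consequently E[J] ≥ (K+1)/2. -/
/-- Key step for the AAPS efficiency bound: with `r_j = (K+1-j) s(j)` and `s` convex
with `s(0) = 0`, one has `r_{K+1-j} ≥ r_j` for `1 ≤ j ≤ (K+1)/2`, and hence the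
displacement `J` with `P(J=j) ∝ r_j` satisfies `E[J] ≥ (K+1)/2`. -/
theorem aaps_weight_symmetry_and_mean (K : ℕ) (hK : 1 ≤ K)
    (s : ℝ → ℝ)
    (hconv : ConvexOn ℝ (Set.Icc (0 : ℝ) (K : ℝ)) s)
    (hs0 : s 0 = 0)
    (hnonneg : ∀ x ∈ Set.Icc (0 : ℝ) (K : ℝ), 0 ≤ s x)
    (hpos : 0 < ∑ j ∈ Finset.Icc 1 K, ((K : ℝ) + 1 - (j : ℝ)) * s (j : ℝ)) :
    (∀ j : ℕ, 1 ≤ j → 2 * j ≤ K + 1 →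
      ((K : ℝ) + 1 - ((K : ℝ) + 1 - (j : ℝ))) * s ((K : ℝ) + 1 - (j : ℝ))
        ≥ ((K : ℝ) + 1 - (j : ℝ)) * s (j : ℝ)) ∧
    (∑ j ∈ Finset.Icc 1 K, (j : ℝ) * (((K : ℝ) + 1 - (j : ℝ)) * s (j : ℝ)))
        / (∑ j ∈ Finset.Icc 1 K, ((K : ℝ) + 1 - (j : ℝ)) * s (j : ℝ))
      ≥ ((K : ℝ) + 1) / 2 := by
  have hK1 : (1:ℝ) ≤ (K:ℝ) := by exact_mod_cast hK
  -- chord slope monotonicity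
  have chord : ∀ a b : ℝ, 0 < a → a ≤ b → b ≤ (K:ℝ) → b * s a ≤ a * s b := by
    intro a b ha hab hbK
    have hb : 0 < b := lt_of_lt_of_le ha hab
    have ht0 : 0 ≤ a / b := by positivity
    have ht1 : a / b ≤ 1 := by rw [div_le_one hb]; exact hab
    have h0 : (0:ℝ) ∈ Set.Icc (0:ℝ) (K:ℝ) := ⟨le_refl _, by linarith⟩
    have hbm : b ∈ Set.Icc (0:ℝ) (K:ℝ) := ⟨le_of_lt hb, hbK⟩
    have hcv := hconv.2 h0 hbm (by linarith : (0:ℝ) ≤ 1 - a/b) ht0 (by ring)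
    have heq : (1 - a/b) • (0:ℝ) + (a/b) • b = a := by
      field_simp
      rw [smul_eq_mul, smul_eq_mul, mul_zero, zero_add, div_mul_cancel₀ a hb.ne']
    rw [heq, hs0] at hcv
    simp only [smul_eq_mul, mul_zero, zero_add] at hcv
    calc b * s a ≤ b * ((a/b) * s b) := by
          exact mul_le_mul_of_nonneg_left hcv (le_of_lt hb)
      _ = a * s b := by field_simp
  set r : ℕ → ℝ := fun j => ((K:ℝ) + 1 - (j:ℝ)) * s (j:ℝ) with hr
  have key : ∀ j : ℕ, 1 ≤ j → 2 * j ≤ K + 1 → r j ≤ r (K + 1 - j) := by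
    intro j h1 h2
    have hjK : j ≤ K := by omega
    have hcast : ((K + 1 - j : ℕ) : ℝ) = (K:ℝ) + 1 - (j:ℝ) := by
      have : j ≤ K + 1 := by omega
      push_cast [Nat.cast_sub this]; ring
    have hja : (0:ℝ) < (j:ℝ) := by exact_mod_cast h1
    have hab : (j:ℝ) ≤ (K:ℝ) + 1 - (j:ℝ) := by
      have : (2 * j : ℝ) ≤ (K:ℝ) + 1 := by exact_mod_cast h2
      linarith
    have hbK : (K:ℝ) + 1 - (j:ℝ) ≤ (K:ℝ) := by
      have : (1:ℝ) ≤ (j:ℝ) := by exact_mod_cast h1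
      linarith
    have hch := chord (j:ℝ) ((K:ℝ) + 1 - (j:ℝ)) hja hab hbK
    simp only [hr, hcast]
    calc ((K:ℝ) + 1 - (j:ℝ)) * s (j:ℝ) ≤ (j:ℝ) * s ((K:ℝ) + 1 - (j:ℝ)) := hch
      _ = ((K:ℝ) + 1 - ((K:ℝ) + 1 - (j:ℝ))) * s ((K:ℝ) + 1 - (j:ℝ)) := by ring
  have part1 : ∀ j : ℕ, 1 ≤ j → 2 * j ≤ K + 1 →
      ((K : ℝ) + 1 - ((K : ℝ) + 1 - (j : ℝ))) * s ((K : ℝ) + 1 - (j : ℝ))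
        ≥ ((K : ℝ) + 1 - (j : ℝ)) * s (j : ℝ) := by
    intro j h1 h2
    have hk := key j h1 h2
    have hcast : ((K + 1 - j : ℕ) : ℝ) = (K:ℝ) + 1 - (j:ℝ) := by
      have : j ≤ K + 1 := by omega
      push_cast [Nat.cast_sub this]; ring
    simp only [hr, hcast] at hk
    calc ((K : ℝ) + 1 - (j : ℝ)) * s (j : ℝ)
        ≤ ((K:ℝ) + 1 - ((K:ℝ) + 1 - (j:ℝ))) * s ((K:ℝ) + 1 - (j:ℝ)) := hk
      _ = _ := by ring
  refine ⟨part1, ?_⟩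
  set f : ℕ → ℝ := fun j => ((j:ℝ) - ((K:ℝ) + 1)/2) * r j with hf
  have hpair : ∀ j ∈ Finset.Icc 1 K, 0 ≤ f j + f (K + 1 - j) := by
    intro j hj
    rw [Finset.mem_Icc] at hj
    set m := K + 1 - j with hm
    have hm1 : 1 ≤ m := by omega
    have hmK : m ≤ K := by omega
    have hmm : K + 1 - m = j := by omega
    have hcast : (m : ℝ) = (K:ℝ) + 1 - (j:ℝ) := by
      simp only [hm]
      have : j ≤ K + 1 := by omega
      push_cast [Nat.cast_sub this]; ring
    rcases le_or_gt (2 * j) (K + 1) with h2 | h2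
    · have hk := key j hj.1 h2
      rw [← hm] at hk
      have hc : (j:ℝ) - ((K:ℝ) + 1)/2 ≤ 0 := by
        have : (2 * j : ℝ) ≤ (K:ℝ) + 1 := by exact_mod_cast h2
        linarith
      simp only [hf, hcast]
      nlinarith [hk]
    · have h2m : 2 * m ≤ K + 1 := by omega
      have hk := key m hm1 h2m
      rw [hmm] at hk
      have hc : 0 ≤ (j:ℝ) - ((K:ℝ) + 1)/2 := by
        have : (K:ℝ) + 1 ≤ (2 * j : ℝ) := by exact_mod_cast h2.le
        linarith
      simp only [hf, hcast]
      nlinarith [hk]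
  have hrefl : ∑ j ∈ Finset.Icc 1 K, f j = ∑ j ∈ Finset.Icc 1 K, f (K + 1 - j) := by
    apply Finset.sum_nbij' (i := fun j => K + 1 - j) (j := fun j => K + 1 - j) <;>
      intros a ha <;> simp only [Finset.mem_Icc] at * <;>
      first | omega | (congr 1; omega)
  have hfsum : 0 ≤ ∑ j ∈ Finset.Icc 1 K, f j := by
    have h2 : 2 * ∑ j ∈ Finset.Icc 1 K, f j
        = ∑ j ∈ Finset.Icc 1 K, (f j + f (K + 1 - j)) := by
      rw [Finset.sum_add_distrib, ← hrefl]; ring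
    have := Finset.sum_nonneg hpair
    linarith
  have hexp : ∑ j ∈ Finset.Icc 1 K, f j
      = (∑ j ∈ Finset.Icc 1 K, (j:ℝ) * r j)
        - ((K:ℝ) + 1)/2 * ∑ j ∈ Finset.Icc 1 K, r j := by
    rw [Finset.mul_sum, ← Finset.sum_sub_distrib]
    apply Finset.sum_congr rfl
    intro j _
    simp only [hf]; ring
  rw [ge_iff_le, le_div_iff₀ hpos]
  simp only [hr] at hexp hfsum
  linarith
end
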